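/- Let w ∈ A₂ᵈ. Then for every dyadic interval I, the coefficient c_I = √|I|(w_{I₋} − w_{I₊})/(2w_I) satisfies c_I²/|I| ≤ 1 − 1/[w]_{A₂ᵈ} < 1; in particular |w_{I₋} − w_{I₊}| < 2 w_I. -/

import Mathlib

open MeasureTheory Set Filter
noncomputable section

/-- The dyadic interval of generation `n` and position `k`: `[k·2⁻ⁿ, (k+1)·2⁻ⁿ)`. -/
def dI (n k : ℤ) : Set ℝ := Set.Ico ((k : ℝ) * 2 ^ (-n)) (((k : ℝ) + 1) * 2 ^ (-n))

/-- The length `2⁻ⁿ` of a dyadic interval of generation `n`. -/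
def len (n : ℤ) : ℝ := 2 ^ (-n)

/-- The average of `w` over the dyadic interval of generation `n`, position `k`. -/
def avg (w : ℝ → ℝ) (n k : ℤ) : ℝ := (2 : ℝ) ^ (n : ℤ) * ∫ x in dI n k, w x

/-- Average over the left half. -/
def avgL (w : ℝ → ℝ) (n k : ℤ) : ℝ := avg w (n + 1) (2 * k)

/-- Average over the right half. -/
def avgR (w : ℝ → ℝ) (n k : ℤ) : ℝ := avg w (n + 1) (2 * k + 1)

/-- The coefficient `c_I = √|I| (w_{I₋} − w_{I₊})/(2 w_I)`. -/
def cI (w : ℝ → ℝ) (n k : ℤ) : ℝ :=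
  Real.sqrt (len n) * (avgL w n k - avgR w n k) / (2 * avg w n k)

/-- The pointwise inverse `w⁻¹` of a weight. -/
def inv' (w : ℝ → ℝ) : ℝ → ℝ := fun x => (w x)⁻¹

/-- The dyadic A₂ characteristic `[w]_{A₂ᵈ} = sup_Q (⨍_Q w)(⨍_Q w⁻¹)`. -/
def A2d (w : ℝ → ℝ) : ℝ := ⨆ p : ℤ × ℤ, avg w p.1 p.2 * avg (inv' w) p.1 p.2

/-- The Haar function of the dyadic interval of generation `n`, position `k`. -/
def haar (n k : ℤ) : ℝ → ℝ := fun x =>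
  (Real.sqrt (len n))⁻¹ *
    ((dI (n + 1) (2 * k + 1)).indicator (fun _ => (1 : ℝ)) x -
      (dI (n + 1) (2 * k)).indicator (fun _ => (1 : ℝ)) x)

/-- The measure `w dx`. -/
def wMeas (w : ℝ → ℝ) : Measure ℝ := volume.withDensity fun x => ENNReal.ofReal (w x)

lemma volume_dI (n k : ℤ) : volume (dI n k) = ENNReal.ofReal ((2:ℝ) ^ (-n)) := by
  rw [dI, Real.volume_Ico]
  congr 1; ring

lemma integrableOn_dI {w : ℝ → ℝ} (hloc : LocallyIntegrable w volume) (n k : ℤ) :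
    IntegrableOn w (dI n k) volume :=
  (hloc.integrableOn_isCompact (isCompact_Icc (a := (k:ℝ) * 2 ^ (-n))
    (b := ((k:ℝ)+1) * 2 ^ (-n)))).mono_set Set.Ico_subset_Icc_self

lemma integral_dI_pos {w : ℝ → ℝ} (hpos : ∀ x, 0 < w x)
    (hloc : LocallyIntegrable w volume) (n k : ℤ) : 0 < ∫ x in dI n k, w x := by
  rw [setIntegral_pos_iff_support_of_nonneg_ae
    (Filter.Eventually.of_forall fun x => (hpos x).le) (integrableOn_dI hloc n k)]
  have : Function.support w = Set.univ := by
    ext x; simp [Function.mem_support, (hpos x).ne']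
  rw [this, Set.univ_inter, volume_dI]
  simp [ENNReal.ofReal_pos]
  positivity

lemma dI_left_eq (n k : ℤ) :
    dI (n+1) (2*k) = Set.Ico ((k:ℝ) * 2 ^ (-n)) (((k:ℝ) + 1/2) * 2 ^ (-n)) := by
  have h2 : (2:ℝ) ^ (-(n+1)) = 2 ^ (-n) / 2 := by
    rw [neg_add, zpow_add₀ (two_ne_zero : (2:ℝ) ≠ 0), zpow_neg_one, ← div_eq_mul_inv]
  unfold dI; rw [h2]; push_cast; congr 1 <;> ring_nf

lemma dI_right_eq (n k : ℤ) :
    dI (n+1) (2*k+1) = Set.Ico (((k:ℝ) + 1/2) * 2 ^ (-n)) (((k:ℝ) + 1) * 2 ^ (-n)) := by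
  have h2 : (2:ℝ) ^ (-(n+1)) = 2 ^ (-n) / 2 := by
    rw [neg_add, zpow_add₀ (two_ne_zero : (2:ℝ) ≠ 0), zpow_neg_one, ← div_eq_mul_inv]
  unfold dI; rw [h2]; push_cast; congr 1 <;> ring_nf

lemma dI_split (n k : ℤ) : dI n k = dI (n+1) (2*k) ∪ dI (n+1) (2*k+1) := by
  rw [dI_left_eq, dI_right_eq, Set.Ico_union_Ico_eq_Ico]
  · rfl
  · have : (0:ℝ) < 2 ^ (-n) := by positivity
    nlinarith
  · have : (0:ℝ) < 2 ^ (-n) := by positivity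
    nlinarith

lemma integral_dI_split {w : ℝ → ℝ} (hloc : LocallyIntegrable w volume) (n k : ℤ) :
    ∫ x in dI n k, w x
      = (∫ x in dI (n+1) (2*k), w x) + ∫ x in dI (n+1) (2*k+1), w x := by
  rw [dI_split n k]
  refine setIntegral_union ?_ ?_ (integrableOn_dI hloc _ _) (integrableOn_dI hloc _ _)
  · rw [dI_left_eq, dI_right_eq]; exact Set.Ico_disjoint_Ico_same
  · exact measurableSet_Ico


lemma avg_pos {w : ℝ → ℝ} (hpos : ∀ x, 0 < w x)
    (hloc : LocallyIntegrable w volume) (n k : ℤ) : 0 < avg w n k := by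
  unfold avg
  have := integral_dI_pos hpos hloc n k
  positivity

lemma avg_half {w : ℝ → ℝ} (hloc : LocallyIntegrable w volume) (n k : ℤ) :
    avg w n k = (avgL w n k + avgR w n k) / 2 := by
  unfold avgL avgR avg
  rw [integral_dI_split hloc n k, zpow_add₀ (two_ne_zero : (2:ℝ) ≠ 0)]
  ring

lemma one_le_avg_mul {w : ℝ → ℝ} (hpos : ∀ x, 0 < w x)
    (hloc : LocallyIntegrable w volume) (hloc' : LocallyIntegrable (inv' w) volume)
    (n k : ℤ) : 1 ≤ avg w n k * avg (inv' w) n k := by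
  set μ := volume.restrict (dI n k) with hμ
  have hmf : AEStronglyMeasurable (fun x => Real.sqrt (w x)) μ :=
    (Real.continuous_sqrt.comp_aestronglyMeasurable
      (hloc.aestronglyMeasurable.restrict))
  have hmg : AEStronglyMeasurable (fun x => Real.sqrt ((w x)⁻¹)) μ :=
    (Real.continuous_sqrt.comp_aestronglyMeasurable
      (hloc'.aestronglyMeasurable.restrict))
  have hsqf : ∀ x, Real.sqrt (w x) ^ 2 = w x := fun x => Real.sq_sqrt (hpos x).le
  have hsqg : ∀ x, Real.sqrt ((w x)⁻¹) ^ 2 = (w x)⁻¹ := fun x =>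
    Real.sq_sqrt (inv_nonneg.2 (hpos x).le)
  have hf : MemLp (fun x => Real.sqrt (w x)) (ENNReal.ofReal 2) μ := by
    rw [show ENNReal.ofReal 2 = 2 by norm_num]
    refine (memLp_two_iff_integrable_sq hmf).2 ?_
    have : (fun x => Real.sqrt (w x) ^ 2) = w := by funext x; exact hsqf x
    rw [this]; exact integrableOn_dI hloc n k
  have hg : MemLp (fun x => Real.sqrt ((w x)⁻¹)) (ENNReal.ofReal 2) μ := by
    rw [show ENNReal.ofReal 2 = 2 by norm_num]
    refine (memLp_two_iff_integrable_sq hmg).2 ?_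
    have : (fun x => Real.sqrt ((w x)⁻¹) ^ 2) = inv' w := by funext x; exact hsqg x
    rw [this]; exact integrableOn_dI hloc' n k
  have hpq : Real.HolderConjugate 2 2 := ⟨by norm_num, by norm_num, by norm_num⟩
  have key := integral_mul_le_Lp_mul_Lq_of_nonneg hpq
    (Filter.Eventually.of_forall fun x => Real.sqrt_nonneg (w x))
    (Filter.Eventually.of_forall fun x => Real.sqrt_nonneg ((w x)⁻¹)) hf hg
  have hone : ∀ x, Real.sqrt (w x) * Real.sqrt ((w x)⁻¹) = 1 := by
    intro x
    rw [Real.sqrt_inv, mul_inv_cancel₀ (Real.sqrt_ne_zero'.2 (hpos x))]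
  have hL : ∫ a, Real.sqrt (w a) * Real.sqrt ((w a)⁻¹) ∂μ = (2:ℝ) ^ (-n) := by
    simp only [hone]
    rw [hμ, setIntegral_const, Measure.real, volume_dI, smul_eq_mul, mul_one,
      ENNReal.toReal_ofReal (by positivity)]
  have hF : ∫ a, Real.sqrt (w a) ^ (2:ℝ) ∂μ = ∫ x in dI n k, w x := by
    refine integral_congr_ae (Filter.Eventually.of_forall fun x => ?_)
    simp only [Real.rpow_two]; exact hsqf x
  have hG : ∫ a, Real.sqrt ((w a)⁻¹) ^ (2:ℝ) ∂μ = ∫ x in dI n k, inv' w x := by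
    refine integral_congr_ae (Filter.Eventually.of_forall fun x => ?_)
    simp only [Real.rpow_two]; exact hsqg x
  rw [hL, hF, hG] at key
  have hIw : 0 < ∫ x in dI n k, w x := integral_dI_pos hpos hloc n k
  have hIv : 0 < ∫ x in dI n k, inv' w x :=
    integral_dI_pos (fun x => inv_pos.2 (hpos x)) hloc' n k
  -- square both sides of key
  have key2 : ((2:ℝ) ^ (-n)) ^ 2 ≤ (∫ x in dI n k, w x) * ∫ x in dI n k, inv' w x := by
    have h1 : ((∫ x in dI n k, w x) ^ (1/2:ℝ)) ^ 2 = ∫ x in dI n k, w x := by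
      rw [← Real.rpow_natCast (_ ^ (1/2:ℝ)) 2, ← Real.rpow_mul hIw.le]; norm_num
    have h2 : ((∫ x in dI n k, inv' w x) ^ (1/2:ℝ)) ^ 2 = ∫ x in dI n k, inv' w x := by
      rw [← Real.rpow_natCast (_ ^ (1/2:ℝ)) 2, ← Real.rpow_mul hIv.le]; norm_num
    calc ((2:ℝ) ^ (-n)) ^ 2
        ≤ ((∫ x in dI n k, w x) ^ (1/2:ℝ) * (∫ x in dI n k, inv' w x) ^ (1/2:ℝ)) ^ 2 := by
          apply pow_le_pow_left₀ (by positivity) key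
      _ = _ := by rw [mul_pow, h1, h2]
  unfold avg
  have h4 : (2:ℝ) ^ (n:ℤ) * 2 ^ (-n) = 1 := by
    rw [← zpow_add₀ (two_ne_zero : (2:ℝ) ≠ 0)]; simp
  nlinarith [sq_nonneg ((2:ℝ)^(n:ℤ)), pow_pos (zpow_pos (two_pos : (0:ℝ) < 2) n) 2]

/-- `c_I²/|I| ≤ 1 − 1/[w]_{A₂ᵈ} < 1`, so `|w_{I₋} − w_{I₊}| < 2 w_I`. -/
theorem cI_sq_div_len_lt_one (w : ℝ → ℝ) (hpos : ∀ x, 0 < w x)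
    (hloc : LocallyIntegrable w volume) (hloc' : LocallyIntegrable (inv' w) volume)
    (hbdd : BddAbove (Set.range fun p : ℤ × ℤ => avg w p.1 p.2 * avg (inv' w) p.1 p.2))
    (n k : ℤ) :
    (cI w n k) ^ 2 / len n ≤ 1 - (A2d w)⁻¹ ∧ 1 - (A2d w)⁻¹ < 1 ∧
      |avgL w n k - avgR w n k| < 2 * avg w n k := by
  have ha : 0 < avgL w n k := avg_pos hpos hloc (n+1) (2*k)
  have hb : 0 < avgR w n k := avg_pos hpos hloc (n+1) (2*k+1)
  have hm : 0 < avg w n k := avg_pos hpos hloc n k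
  set a := avgL w n k with hadef
  set b := avgR w n k with hbdef
  set m := avg w n k with hmdef
  have hmab : m = (a + b) / 2 := avg_half hloc n k
  have hsup : ∀ p q : ℤ, avg w p q * avg (inv' w) p q ≤ A2d w := fun p q =>
    le_ciSup hbdd ((p, q) : ℤ × ℤ)
  have hA1 : 1 ≤ A2d w := (one_le_avg_mul hpos hloc hloc' n k).trans (hsup n k)
  have hApos : 0 < A2d w := zero_lt_one.trans_le hA1
  have h1 : a⁻¹ ≤ avg (inv' w) (n+1) (2*k) := by
    rw [inv_le_iff_one_le_mul₀' ha]
    exact one_le_avg_mul hpos hloc hloc' (n+1) (2*k)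
  have h2 : b⁻¹ ≤ avg (inv' w) (n+1) (2*k+1) := by
    rw [inv_le_iff_one_le_mul₀' hb]
    exact one_le_avg_mul hpos hloc hloc' (n+1) (2*k+1)
  have hinvsplit : avg (inv' w) n k
      = (avg (inv' w) (n+1) (2*k) + avg (inv' w) (n+1) (2*k+1)) / 2 := avg_half hloc' n k
  have hAm : m ^ 2 / (a * b) ≤ A2d w := by
    calc m ^ 2 / (a * b) = m * ((a⁻¹ + b⁻¹) / 2) := by
          rw [hmab]; field_simp; ring
      _ ≤ m * avg (inv' w) n k := by
          apply mul_le_mul_of_nonneg_left _ hm.le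
          rw [hinvsplit]
          gcongr
      _ ≤ A2d w := hsup n k
  have hinvA : (A2d w)⁻¹ ≤ a * b / m ^ 2 := by
    have h3 : 0 < m ^ 2 / (a * b) := by positivity
    have := one_div_le_one_div_of_le h3 hAm
    rw [one_div, one_div_div] at this
    exact this
  have hlen : 0 < len n := by unfold len; positivity
  have hq : cI w n k ^ 2 / len n = (a - b) ^ 2 / (4 * m ^ 2) := by
    rw [cI, ← hadef, ← hbdef, ← hmdef, div_pow, mul_pow,
      Real.sq_sqrt hlen.le]
    field_simp
    ring
  have heq : (a - b) ^ 2 / (4 * m ^ 2) = 1 - a * b / m ^ 2 := by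
    rw [hmab]
    have hab : a + b ≠ 0 := by positivity
    field_simp
    ring
  have hmain : cI w n k ^ 2 / len n ≤ 1 - (A2d w)⁻¹ := by
    rw [hq, heq]
    linarith
  have hlt : 1 - (A2d w)⁻¹ < 1 := by
    have : 0 < (A2d w)⁻¹ := inv_pos.2 hApos
    linarith
  refine ⟨hmain, hlt, ?_⟩
  have hsq : (a - b) ^ 2 < (2 * m) ^ 2 := by
    have h5 : (a - b) ^ 2 / (4 * m ^ 2) < 1 := by
      rw [hq] at hmain; linarith
    have h6 : 0 < 4 * m ^ 2 := by positivity
    nlinarith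
  exact abs_lt_of_sq_lt_sq hsq (by positivity)
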